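/- arXiv:1802.01283 — 3 statements merged into one kernel-verified Lean document; each statement's English description precedes it below -/
import Mathlib

section
/- Let R = ⊕_{(i,j) ∈ ℕ₀²} R_{(i,j)} be a standard Noetherian ℕ₀²-graded algebra with A = R_{(0,0)} Noetherian, and let M = ⊕ M_{(r,s)} be a finitely generated bigraded R-module. Then there exists (n₀, i₀) ∈ ℕ₀² such that Ass_A(M_{(n,i)}) = Ass_A(M_{(n₀,i₀)}) for all (n, i) with n ≥ n₀ and i ≥ i₀. -/
/-!
Statement 9: Let R = ⊕_{(i,j) ∈ ℕ₀²} R_{(i,j)} be a standard Noetherian ℕ₀²-graded algebra with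
A = R_{(0,0)} Noetherian, and let M = ⊕ M_{(r,s)} be a finitely generated bigraded R-module.
Then there exists (n₀, i₀) ∈ ℕ₀² such that Ass_A(M_{(n,i)}) = Ass_A(M_{(n₀,i₀)}) for all (n, i)
with n ≥ n₀ and i ≥ i₀.
-/


namespace AssBigradedProof


open Submodule

section AssGeneral

variable {R M : Type} [CommRing R] [AddCommGroup M] [Module R M]

lemma ann_coe (N : Submodule R M) (x : ↥N) :
    (R ∙ x).annihilator = (R ∙ (x : M)).annihilator := by
  ext a
  simp only [Submodule.mem_annihilator_span_singleton]
  rw [← Submodule.coe_smul, ← ZeroMemClass.coe_eq_zero]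

lemma colon_eq_ann (x : M) : (⊥ : Submodule R M).colon {x} = (R ∙ x).annihilator := by
  ext a
  rw [Submodule.mem_colon_singleton, Submodule.mem_bot, Submodule.mem_annihilator_span_singleton]

lemma ass_iff' [IsNoetherianRing R] {p : Ideal R} :
    p ∈ associatedPrimes R M ↔ p.IsPrime ∧ ∃ x : M, p = (R ∙ x).annihilator := by
  rw [AssociatedPrimes.mem_iff, isAssociatedPrime_iff]
  simp only [colon_eq_ann]

lemma ann_smul {p : Ideal R} (hp : p.IsPrime) {x : M} (hx : p = (R ∙ x).annihilator)
    {r : R} (hr : r ∉ p) : (R ∙ (r • x)).annihilator = p := by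
  ext s
  rw [Submodule.mem_annihilator_span_singleton]
  constructor
  · intro h
    have : (s * r) • x = 0 := by rw [mul_smul]; exact h
    have : s * r ∈ p := by
      rw [hx, Submodule.mem_annihilator_span_singleton]; exact this
    exact (hp.mem_or_mem this).resolve_right hr
  · intro h
    have hsx : s • x = 0 := by
      have : s ∈ (R ∙ x).annihilator := hx ▸ h
      rwa [Submodule.mem_annihilator_span_singleton] at this
    rw [smul_comm, hsx, smul_zero]

lemma ass_subset_union [IsNoetherianRing R] (N : Submodule R M) :
    associatedPrimes R M ⊆ associatedPrimes R (↥N) ∪ associatedPrimes R (M ⧸ N) := by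
  intro p hpm
  obtain ⟨hp, x, hx⟩ := ass_iff'.mp hpm
  by_cases h : ∃ r : R, r • x ∈ N ∧ r ∉ p
  · obtain ⟨r, hrN, hrp⟩ := h
    left
    exact ass_iff'.mpr ⟨hp, ⟨r • x, hrN⟩, by rw [ann_coe]; exact (ann_smul hp hx hrp).symm⟩
  · push_neg at h
    right
    refine ass_iff'.mpr ⟨hp, N.mkQ x, ?_⟩
    ext s
    rw [Submodule.mem_annihilator_span_singleton, ← map_smul, Submodule.mkQ_apply,
      Submodule.Quotient.mk_eq_zero]
    constructor
    · intro hs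
      have : s • x = 0 := by
        have : s ∈ (R ∙ x).annihilator := hx ▸ hs
        rwa [Submodule.mem_annihilator_span_singleton] at this
      rw [this]; exact N.zero_mem
    · intro hs
      exact h s hs

lemma ass_span_singleton_subset [IsNoetherianRing R] {x : M} {p : Ideal R} (hp : p.IsPrime)
    (hx : p = (R ∙ x).annihilator) :
    associatedPrimes R (↥(R ∙ x)) ⊆ {p} := by
  intro q hqm
  obtain ⟨hq, y, hy⟩ := ass_iff'.mp hqm
  obtain ⟨r, hr⟩ := Submodule.mem_span_singleton.mp y.2
  have hy' : q = (R ∙ (r • x)).annihilator := by rw [hy, ann_coe]; congr 1; rw [hr]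
  have hr' : r ∉ p := by
    intro hrp
    have : r • x = 0 := by
      have : r ∈ (R ∙ x).annihilator := hx ▸ hrp
      rwa [Submodule.mem_annihilator_span_singleton] at this
    rw [this] at hy'
    exact hq.ne_top (by
      rw [hy', Ideal.eq_top_iff_one, Submodule.mem_annihilator_span_singleton, one_smul])
  simp only [Set.mem_singleton_iff]
  rw [hy', ann_smul hp hx hr']

theorem ass_finite [IsNoetherianRing R] [Module.Finite R M] :
    (associatedPrimes R M).Finite := by
  have hN : IsNoetherian R M := inferInstance
  have key : ∀ N : Submodule R M, (associatedPrimes R (M ⧸ N)).Finite := by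
    intro N
    induction N using WellFounded.induction (isNoetherian_iff.mp hN) with
    | _ N IH =>
      by_cases hne : (associatedPrimes R (M ⧸ N)).Nonempty
      · obtain ⟨p, hpm⟩ := hne
        obtain ⟨hp, xq, hxq⟩ := ass_iff'.mp hpm
        obtain ⟨x, rfl⟩ := Submodule.mkQ_surjective N xq
        have hxN : x ∉ N := by
          intro hxN
          have : N.mkQ x = 0 := by rwa [Submodule.mkQ_apply, Submodule.Quotient.mk_eq_zero]
          rw [this] at hxq
          exact hp.ne_top (by
            rw [hxq, Submodule.span_singleton_eq_bot.mpr rfl, Submodule.annihilator_bot])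
        set N' : Submodule R M := N ⊔ (R ∙ x) with hN'
        have hlt : N < N' := by
          refine lt_of_le_of_ne le_sup_left (fun hEq => hxN ?_)
          rw [hEq]
          exact (le_sup_right : (R ∙ x) ≤ N ⊔ (R ∙ x)) (Submodule.mem_span_singleton_self x)
        have hmap : (R ∙ (N.mkQ x)) = Submodule.map N.mkQ N' := by
          rw [hN', Submodule.map_sup, Submodule.mkQ_map_self, bot_sup_eq,
            Submodule.map_span, Set.image_singleton]
        have hEq2 : associatedPrimes R ((M ⧸ N) ⧸ (R ∙ (N.mkQ x)))
            = associatedPrimes R (M ⧸ N') := by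
          rw [hmap]
          exact LinearEquiv.AssociatedPrimes.eq
            (Submodule.quotientQuotientEquivQuotient N N' le_sup_left)
        refine Set.Finite.subset (Set.Finite.union (Set.finite_singleton p) (IH N' hlt)) ?_
        intro q hq
        rcases ass_subset_union (R ∙ (N.mkQ x)) hq with h | h
        · exact Or.inl (ass_span_singleton_subset hp hxq h)
        · exact Or.inr (hEq2 ▸ h)
      · rw [Set.not_nonempty_iff_eq_empty] at hne
        rw [hne]; exact Set.finite_empty
  have := key ⊥
  rwa [LinearEquiv.AssociatedPrimes.eq (Submodule.quotEquivOfEqBot (⊥ : Submodule R M) rfl)]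
    at this

end AssGeneral



open Submodule

section Contract

variable {A R M : Type} [CommRing A] [CommRing R] [Algebra A R]
  [AddCommGroup M] [Module A M] [Module R M] [IsScalarTower A R M]

lemma contract [IsNoetherianRing R] {p : Ideal A} (hp : p.IsPrime) (x : M)
    (hx : p = (A ∙ x).annihilator) :
    ∃ Q ∈ associatedPrimes R M, Q.comap (algebraMap A R) = p := by
  classical
  have annA_mem : ∀ (y : M) (a : A), a ∈ (A ∙ y).annihilator ↔ a • y = 0 := fun y a =>
    Submodule.mem_annihilator_span_singleton y a
  have annR_mem : ∀ (y : M) (r : R), r ∈ (R ∙ y).annihilator ↔ r • y = 0 := fun y r =>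
    Submodule.mem_annihilator_span_singleton y r
  set 𝒮 : Set (Ideal R) := {J | ∃ y : M, J = (R ∙ y).annihilator ∧ (A ∙ y).annihilator = p}
    with h𝒮
  have hne : 𝒮.Nonempty := ⟨(R ∙ x).annihilator, x, rfl, hx.symm⟩
  obtain ⟨Q, hQ𝒮, hQmax⟩ :=
    (set_has_maximal_iff_noetherian.mpr (inferInstance : IsNoetherian R R)) 𝒮 hne
  obtain ⟨y, rfl, hyp⟩ := hQ𝒮
  -- step 1 : scaling by `a ∉ p` preserves the annihilator over `A`
  have step1 : ∀ a : A, a ∉ p → (A ∙ (a • y)).annihilator = p := by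
    intro a ha
    ext b
    rw [annA_mem]
    constructor
    · intro h
      have : (b * a) • y = 0 := by rw [mul_smul]; exact h
      have hba : b * a ∈ p := by rw [← hyp, annA_mem]; exact this
      exact (hp.mem_or_mem hba).resolve_right ha
    · intro hb
      have hby : b • y = 0 := by rw [← annA_mem, hyp]; exact hb
      rw [smul_comm, hby, smul_zero]
  -- step 2 : scaling by `a ∉ p` preserves the annihilator over `R`
  have step2 : ∀ a : A, a ∉ p → (R ∙ (a • y)).annihilator = (R ∙ y).annihilator := by
    intro a ha
    have hle : (R ∙ y).annihilator ≤ (R ∙ (a • y)).annihilator := by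
      intro r hr
      rw [annR_mem] at hr ⊢
      rw [smul_comm, hr, smul_zero]
    have hmem : (R ∙ (a • y)).annihilator ∈ 𝒮 := ⟨a • y, rfl, step1 a ha⟩
    exact ((hle.lt_or_eq).resolve_left (hQmax _ hmem)).symm
  have hy0 : y ≠ 0 := by
    intro h
    apply hp.ne_top
    rw [← hyp, h, Ideal.eq_top_iff_one, annA_mem, smul_zero]
  have hQprime : ((R ∙ y).annihilator).IsPrime := by
    constructor
    · intro htop
      apply hy0
      have : (1 : R) ∈ (R ∙ y).annihilator := htop ▸ Submodule.mem_top
      rwa [annR_mem, one_smul] at this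
    · intro r s hrs
      by_contra hcon
      push_neg at hcon
      obtain ⟨hr, hs⟩ := hcon
      -- claim : (A ∙ (s • y)).annihilator = p
      have hclaim : (A ∙ (s • y)).annihilator = p := by
        ext b
        rw [annA_mem]
        constructor
        · intro hb
          by_contra hbp
          -- consider z = b • y
          have hz : (R ∙ (b • y)).annihilator = (R ∙ y).annihilator := step2 b hbp
          have : s ∈ (R ∙ (b • y)).annihilator := by
            rw [annR_mem]
            rw [smul_comm]
            exact hb
          rw [hz] at this
          exact hs this
        · intro hb
          have hby : b • y = 0 := by rw [← annA_mem, hyp]; exact hb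
          rw [smul_comm, hby, smul_zero]
      have hmem : (R ∙ (s • y)).annihilator ∈ 𝒮 := ⟨s • y, rfl, hclaim⟩
      have hle : (R ∙ y).annihilator ≤ (R ∙ (s • y)).annihilator := by
        intro r' hr'
        rw [annR_mem] at hr' ⊢
        rw [smul_comm, hr', smul_zero]
      have heq : (R ∙ (s • y)).annihilator = (R ∙ y).annihilator :=
        ((hle.lt_or_eq).resolve_left (hQmax _ hmem)).symm
      apply hr
      rw [← heq, annR_mem, smul_smul]
      rw [← annR_mem y (r * s)]
      exact hrs
  refine ⟨(R ∙ y).annihilator, ass_iff'.mpr ⟨hQprime, y, rfl⟩, ?_⟩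
  ext a
  rw [Ideal.mem_comap, annR_mem, algebraMap_smul, ← hyp, annA_mem]

end Contract



open Submodule DirectSum

section Graded

variable {A R : Type} [CommRing A] [CommRing R] [Algebra A R]
  (𝒜 : ℕ × ℕ → Submodule A R) [GradedAlgebra 𝒜]

lemma mulgr (a b : ℕ × ℕ) : 𝒜 a * 𝒜 b ≤ 𝒜 (a + b) :=
  Submodule.mul_le.mpr fun _ hx _ hy => SetLike.mul_mem_graded hx hy

/-- In a bigraded algebra generated over `A` in degrees (1,0) and (0,1), any homogeneous
component of degree `≥ δ` (for `δ` one of the two unit degrees) factors through degree `δ`. -/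
lemma good {s : Finset R} (hs1 : (↑s : Set R) ⊆ (↑(𝒜 (1, 0)) ∪ ↑(𝒜 (0, 1)) : Set R))
    (hs2 : Algebra.adjoin A (↑s : Set R) = ⊤) (r : R) :
    ∀ δ ε m : ℕ × ℕ, δ.1 + δ.2 = 1 → m = δ + ε →
      (DirectSum.decompose 𝒜 r m : R) ∈ 𝒜 δ * 𝒜 ε := by
  classical
  have hr : r ∈ Algebra.adjoin A (↑s : Set R) := hs2.symm ▸ Algebra.mem_top
  induction hr using Algebra.adjoin_induction with
  | mem x hx =>
    intro δ ε m hδ hm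
    -- x is homogeneous of degree γ with γ.1 + γ.2 = 1
    have hx' : ∃ γ : ℕ × ℕ, γ.1 + γ.2 = 1 ∧ x ∈ 𝒜 γ := by
      rcases hs1 hx with h | h
      · exact ⟨(1, 0), rfl, h⟩
      · exact ⟨(0, 1), rfl, h⟩
    obtain ⟨γ, hγ, hxγ⟩ := hx'
    by_cases hmγ : γ = m
    · rw [DirectSum.decompose_of_mem_same 𝒜 (hmγ ▸ hxγ)]
      -- δ = γ and ε = 0
      have hδγ : δ = γ ∧ ε = (0, 0) := by
        constructor
        · apply Prod.ext_iff.mpr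
          have h1 := congrArg Prod.fst hm
          have h2 := congrArg Prod.snd hm
          simp only [Prod.fst_add, Prod.snd_add] at h1 h2
          rw [← hmγ] at h1 h2
          constructor <;> omega
        · apply Prod.ext_iff.mpr
          have h1 := congrArg Prod.fst hm
          have h2 := congrArg Prod.snd hm
          simp only [Prod.fst_add, Prod.snd_add] at h1 h2
          rw [← hmγ] at h1 h2
          constructor <;> omega
      obtain ⟨rfl, rfl⟩ := hδγ
      have : x = x * 1 := (mul_one x).symm
      rw [this]
      exact Submodule.mul_mem_mul hxγ (SetLike.one_mem_graded 𝒜)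
    · rw [DirectSum.decompose_of_mem_ne 𝒜 hxγ hmγ]
      exact Submodule.zero_mem _
  | algebraMap a =>
    intro δ ε m hδ hm
    have hmem : algebraMap A R a ∈ 𝒜 (0, 0) := by
      rw [Algebra.algebraMap_eq_smul_one]
      exact Submodule.smul_mem _ a (SetLike.one_mem_graded 𝒜)
    have hne : ((0, 0) : ℕ × ℕ) ≠ m := by
      intro h
      have h1 := congrArg Prod.fst hm
      have h2 := congrArg Prod.snd hm
      rw [← h] at h1 h2
      simp only [Prod.fst_add, Prod.snd_add] at h1 h2
      omega
    rw [DirectSum.decompose_of_mem_ne 𝒜 hmem hne]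
    exact Submodule.zero_mem _
  | add x y hx hy ihx ihy =>
    intro δ ε m hδ hm
    rw [DirectSum.decompose_add]
    have : ((DirectSum.decompose 𝒜 x + DirectSum.decompose 𝒜 y) m : R)
        = (DirectSum.decompose 𝒜 x m : R) + (DirectSum.decompose 𝒜 y m : R) := by
      simp
    rw [this]
    exact Submodule.add_mem _ (ihx δ ε m hδ hm) (ihy δ ε m hδ hm)
  | mul x y hx hy ihx ihy =>
    intro δ ε m hδ hm
    -- write x and y as sums of homogeneous components
    have hxsum := DirectSum.sum_support_decompose 𝒜 x
    have hysum := DirectSum.sum_support_decompose 𝒜 y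
    set Dx := (DirectSum.decompose 𝒜 x).support with hDx
    set Dy := (DirectSum.decompose 𝒜 y).support with hDy
    -- the projection to degree m as an additive map
    let pr : R →+ R := AddMonoidHom.mk' (fun z => (DirectSum.decompose 𝒜 z m : R)) (by
      intro a b
      show (DirectSum.decompose 𝒜 (a + b) m : R) = _
      rw [DirectSum.decompose_add]
      simp)
    have key : ∀ c ∈ Dx, ∀ c' ∈ Dy,
        pr ((DirectSum.decompose 𝒜 x c : R) * (DirectSum.decompose 𝒜 y c' : R))
          ∈ 𝒜 δ * 𝒜 ε := by
      intro c _ c' _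
      have hz : ((DirectSum.decompose 𝒜 x c : R) * (DirectSum.decompose 𝒜 y c' : R))
          ∈ 𝒜 (c + c') :=
        SetLike.mul_mem_graded (SetLike.coe_mem _) (SetLike.coe_mem _)
      by_cases hcc : c + c' = m
      · have hproj : pr ((DirectSum.decompose 𝒜 x c : R) * (DirectSum.decompose 𝒜 y c' : R))
            = (DirectSum.decompose 𝒜 x c : R) * (DirectSum.decompose 𝒜 y c' : R) :=
          DirectSum.decompose_of_mem_same 𝒜 (hcc ▸ hz)
        rw [hproj]
        -- δ ≤ c or δ ≤ c'
        have h1 := congrArg Prod.fst hm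
        have h2 := congrArg Prod.snd hm
        have h3 := congrArg Prod.fst hcc
        have h4 := congrArg Prod.snd hcc
        simp only [Prod.fst_add, Prod.snd_add] at h1 h2 h3 h4
        have hcase : (δ.1 ≤ c.1 ∧ δ.2 ≤ c.2) ∨ (δ.1 ≤ c'.1 ∧ δ.2 ≤ c'.2) := by omega
        rcases hcase with ⟨hc1, hc2⟩ | ⟨hc1, hc2⟩
        · -- use ihx on component c
          have hceq : c = δ + (c.1 - δ.1, c.2 - δ.2) := by
            apply Prod.ext_iff.mpr
            simp only [Prod.fst_add, Prod.snd_add]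
            constructor <;> omega
          have hxc := ihx δ (c.1 - δ.1, c.2 - δ.2) c hδ hceq
          have hmm : (DirectSum.decompose 𝒜 x c : R) * (DirectSum.decompose 𝒜 y c' : R)
              ∈ (𝒜 δ * 𝒜 (c.1 - δ.1, c.2 - δ.2)) * 𝒜 c' :=
            Submodule.mul_mem_mul hxc (SetLike.coe_mem _)
          have hεeq : (c.1 - δ.1, c.2 - δ.2) + c' = ε := by
            apply Prod.ext_iff.mpr
            simp only [Prod.fst_add, Prod.snd_add]
            constructor <;> omega
          have hincl : (𝒜 δ * 𝒜 (c.1 - δ.1, c.2 - δ.2)) * 𝒜 c' ≤ 𝒜 δ * 𝒜 ε := by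
            rw [mul_assoc]
            refine mul_le_mul' le_rfl ?_
            rw [← hεeq]
            exact mulgr 𝒜 _ _
          exact hincl hmm
        · -- use ihy on component c'
          have hceq : c' = δ + (c'.1 - δ.1, c'.2 - δ.2) := by
            apply Prod.ext_iff.mpr
            simp only [Prod.fst_add, Prod.snd_add]
            constructor <;> omega
          have hyc := ihy δ (c'.1 - δ.1, c'.2 - δ.2) c' hδ hceq
          have hmm : (DirectSum.decompose 𝒜 x c : R) * (DirectSum.decompose 𝒜 y c' : R)
              ∈ 𝒜 c * (𝒜 δ * 𝒜 (c'.1 - δ.1, c'.2 - δ.2)) :=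
            Submodule.mul_mem_mul (SetLike.coe_mem _) hyc
          have hεeq : c + (c'.1 - δ.1, c'.2 - δ.2) = ε := by
            apply Prod.ext_iff.mpr
            simp only [Prod.fst_add, Prod.snd_add]
            constructor <;> omega
          have hincl : 𝒜 c * (𝒜 δ * 𝒜 (c'.1 - δ.1, c'.2 - δ.2)) ≤ 𝒜 δ * 𝒜 ε := by
            rw [mul_left_comm]
            refine mul_le_mul' le_rfl ?_
            rw [← hεeq]
            exact mulgr 𝒜 _ _
          exact hincl hmm
      · have hproj : pr ((DirectSum.decompose 𝒜 x c : R) * (DirectSum.decompose 𝒜 y c' : R))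
            = 0 := DirectSum.decompose_of_mem_ne 𝒜 hz hcc
        rw [hproj]
        exact Submodule.zero_mem _
    have hxy : x * y = ∑ c ∈ Dx, ∑ c' ∈ Dy,
        (DirectSum.decompose 𝒜 x c : R) * (DirectSum.decompose 𝒜 y c' : R) := by
      conv_lhs => rw [← hxsum, ← hysum]
      rw [Finset.sum_mul_sum]
    have : (DirectSum.decompose 𝒜 (x * y) m : R)
        = pr (x * y) := rfl
    rw [this, hxy, map_sum]
    refine Submodule.sum_mem _ (fun c hc => ?_)
    rw [map_sum]
    exact Submodule.sum_mem _ (fun c' hc' => key c hc c' hc')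

end Graded



open Submodule DirectSum


section GradedModule

variable {A R : Type} [CommRing A] [CommRing R] [Algebra A R]
  (𝒜 : ℕ × ℕ → Submodule A R) [GradedAlgebra 𝒜]
variable {M : Type} [AddCommGroup M] [Module A M] [Module R M] [IsScalarTower A R M]
  (ℳ : ℕ × ℕ → Submodule A M) [DirectSum.Decomposition ℳ] [SetLike.GradedSMul 𝒜 ℳ]

variable (p : Ideal A)

/-- The submodule of elements of `M` killed by `p`. -/
def Hsub : Submodule R M where
  carrier := {x | ∀ a ∈ p, a • x = 0}
  zero_mem' := fun a _ => smul_zero a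
  add_mem' := by
    intro x y hx hy a ha
    rw [smul_add, hx a ha, hy a ha, add_zero]
  smul_mem' := by
    intro r x hx a ha
    rw [smul_comm, hx a ha, smul_zero]

/-- The submodule of elements of `M` that are `p`-torsion "with a unit outside p":
elements killed by some `a ∉ p`. -/
def Tsub (hp : p.IsPrime) : Submodule R M where
  carrier := {x | ∃ a, a ∉ p ∧ a • x = 0}
  zero_mem' := ⟨1, (Ideal.ne_top_iff_one p).mp hp.ne_top, smul_zero 1⟩
  add_mem' := by
    rintro x y ⟨a, ha, hax⟩ ⟨b, hb, hbx⟩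
    refine ⟨a * b, fun h => (hp.mem_or_mem h).elim ha hb, ?_⟩
    have h1 : (a * b) • x = 0 := by rw [mul_comm, mul_smul, hax, smul_zero]
    have h2 : (a * b) • y = 0 := by rw [mul_smul, hbx, smul_zero]
    rw [smul_add, h1, h2, add_zero]
  smul_mem' := by
    rintro r x ⟨a, ha, hax⟩
    exact ⟨a, ha, by rw [smul_comm, hax, smul_zero]⟩

lemma Hsub_graded {x : M} (hx : x ∈ Hsub (R := R) p) (m : ℕ × ℕ) :
    (DirectSum.decompose ℳ x m : M) ∈ Hsub (R := R) p := by
  intro a ha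
  have h0 : a • x = 0 := hx a ha
  have h2 : (DirectSum.decompose ℳ (a • x) m : M) = a • (DirectSum.decompose ℳ x m : M) := by
    rw [DirectSum.decompose_smul]
    rw [DirectSum.smul_apply]; rfl
  rw [h0, DirectSum.decompose_zero] at h2
  simpa using h2.symm

variable {p}

theorem perprime [IsNoetherianRing A] [IsNoetherianRing R] [Module.Finite R M]
    {s : Finset R} (hs1 : (↑s : Set R) ⊆ (↑(𝒜 (1, 0)) ∪ ↑(𝒜 (0, 1)) : Set R))
    (hs2 : Algebra.adjoin A (↑s : Set R) = ⊤) (hp : p.IsPrime) :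
    ∃ a b : ℕ, ∀ n i : ℕ, a ≤ n → b ≤ i →
      (p ∈ associatedPrimes A (ℳ (n, i)) ↔ p ∈ associatedPrimes A (ℳ (a, b))) := by
  classical
  set H : Submodule R M := Hsub (R := R) p with hH
  set T : Submodule R M := Tsub (R := R) p hp with hT
  -- membership characterization
  have memb : ∀ m : ℕ × ℕ,
      p ∈ associatedPrimes A (ℳ m) ↔ ¬ (∀ x ∈ ℳ m, x ∈ H → x ∈ T) := by
    intro m
    constructor
    · intro hpm hall
      obtain ⟨hp', x, hx⟩ := ass_iff'.mp hpm
      have hx' : p = (A ∙ (x : M)).annihilator := by rw [hx, ann_coe]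
      have hxH : (x : M) ∈ H := by
        intro a ha
        have : a ∈ (A ∙ (x : M)).annihilator := hx' ▸ ha
        rwa [Submodule.mem_annihilator_span_singleton] at this
      obtain ⟨a, hap, ha0⟩ := hall (x : M) x.2 hxH
      exact hap (hx'.symm ▸ (Submodule.mem_annihilator_span_singleton _ a).mpr ha0)
    · intro hnot
      push_neg at hnot
      obtain ⟨x, hxm, hxH, hxT⟩ := hnot
      refine ass_iff'.mpr ⟨hp, ⟨x, hxm⟩, ?_⟩
      rw [ann_coe]
      ext a
      rw [Submodule.mem_annihilator_span_singleton]
      constructor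
      · intro ha
        exact hxH a ha
      · intro ha
        by_contra hap
        exact hxT ⟨a, hap, ha⟩
  -- stabilization of the chain of spans of low-degree components of H
  set B : ℕ → Set M := fun t => {x | ∃ c d : ℕ, c ≤ t ∧ d ≤ t ∧ x ∈ ℳ (c, d) ∧ x ∈ H}
    with hB
  have hBmono : Monotone fun t => Submodule.span R (B t) := by
    intro t t' htt'
    apply Submodule.span_mono
    rintro x ⟨c, d, hc, hd, hm, hmem⟩
    exact ⟨c, d, hc.trans htt', hd.trans htt', hm, hmem⟩
  obtain ⟨t₀, ht₀⟩ := monotone_stabilizes_iff_noetherian.mpr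
    (inferInstance : IsNoetherian R M) ⟨fun t => Submodule.span R (B t), hBmono⟩
  -- every element of H lies in the span of components of degree ≤ (t₀, t₀)
  have hHW : ∀ x ∈ H, x ∈ Submodule.span R (B t₀) := by
    intro x hx
    have hxsum := DirectSum.sum_support_decompose ℳ x
    set F := (DirectSum.decompose ℳ x).support with hF
    set t : ℕ := max t₀ (F.sup fun m => max m.1 m.2) with ht
    have hxt : x ∈ Submodule.span R (B t) := by
      rw [← hxsum]
      refine Submodule.sum_mem _ fun m hm => Submodule.subset_span ?_
      refine ⟨m.1, m.2, ?_, ?_, ?_, Hsub_graded ℳ p hx m⟩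
      · exact le_trans (le_trans (le_max_left _ _) (Finset.le_sup (f := fun m : ℕ × ℕ =>
          max m.1 m.2) hm)) (le_max_right _ _)
      · exact le_trans (le_trans (le_max_right _ _) (Finset.le_sup (f := fun m : ℕ × ℕ =>
          max m.1 m.2) hm)) (le_max_right _ _)
      · have := (DirectSum.decompose ℳ x m).2
        simpa using this
    have h' : Submodule.span R (B t₀) = Submodule.span R (B t) := ht₀ t (le_max_left _ _)
    rw [h']
    exact hxt
  -- propagation of "no associated prime p" one step in direction δ
  have prop : ∀ δ m : ℕ × ℕ, δ.1 + δ.2 = 1 → t₀ ≤ m.1 → t₀ ≤ m.2 →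
      (∀ x ∈ ℳ m, x ∈ H → x ∈ T) → ∀ x ∈ ℳ (m + δ), x ∈ H → x ∈ T := by
    intro δ m hδ hm1 hm2 hind x hxm hxH
    have hx' : x ∈ Submodule.span R (B t₀) := hHW x hxH
    have claim : ∀ y, y ∈ Submodule.span R (B t₀) → ∀ r : R,
        (DirectSum.decompose ℳ (r • y) (m + δ) : M) ∈ T := by
      intro y hy
      induction hy using Submodule.span_induction with
      | mem g hg =>
        obtain ⟨c, d, hc, hd, hgm, hgH⟩ := hg
        intro r
        induction r using DirectSum.Decomposition.inductionOn (ℳ := 𝒜) with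
        | zero =>
          rw [zero_smul, DirectSum.decompose_zero]
          simpa using T.zero_mem
        | homogeneous r =>
          rename_i e
          have hz : ((r : R) • g) ∈ ℳ (e + (c, d)) := SetLike.GradedSMul.smul_mem r.2 hgm
          by_cases hcc : e + (c, d) = m + δ
          · have hsame : (DirectSum.decompose ℳ ((r : R) • g) (m + δ) : M) = (r : R) • g :=
              DirectSum.decompose_of_mem_same ℳ (hcc ▸ hz)
            rw [hsame]
            have h1 := congrArg Prod.fst hcc
            have h2 := congrArg Prod.snd hcc
            simp only [Prod.fst_add, Prod.snd_add] at h1 h2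
            have heq : e = δ + (e.1 - δ.1, e.2 - δ.2) := by
              apply Prod.ext_iff.mpr
              simp only [Prod.fst_add, Prod.snd_add]
              constructor <;> omega
            have hre : (DirectSum.decompose 𝒜 (r : R) e : R) = (r : R) :=
              DirectSum.decompose_of_mem_same 𝒜 r.2
            have hr2 : (r : R) ∈ 𝒜 δ * 𝒜 (e.1 - δ.1, e.2 - δ.2) := by
              rw [← hre]
              exact good 𝒜 hs1 hs2 (r : R) δ _ e hδ heq
            refine Submodule.mul_induction_on (C := fun z => z • g ∈ T) hr2 ?_ ?_
            · intro u hu v hv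
              rw [mul_smul]
              have hvg : v • g ∈ ℳ ((e.1 - δ.1, e.2 - δ.2) + (c, d)) :=
                SetLike.GradedSMul.smul_mem hv hgm
              have hidx : ((e.1 - δ.1, e.2 - δ.2) : ℕ × ℕ) + (c, d) = m := by
                apply Prod.ext_iff.mpr
                simp only [Prod.fst_add, Prod.snd_add]
                constructor <;> omega
              rw [hidx] at hvg
              have hvgH : v • g ∈ H := H.smul_mem v hgH
              exact T.smul_mem u (hind (v • g) hvg hvgH)
            · intro z w hzg hwg
              rw [add_smul]
              exact T.add_mem hzg hwg
          · rw [DirectSum.decompose_of_mem_ne ℳ hz hcc]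
            exact T.zero_mem
        | add r r' ihr ihr' =>
          rw [add_smul, DirectSum.decompose_add]
          rw [DirectSum.add_apply]
          rw [Submodule.coe_add]
          exact T.add_mem ihr ihr'
      | zero =>
        intro r
        rw [smul_zero, DirectSum.decompose_zero]
        simpa using T.zero_mem
      | add y y' hyy hyy' ihy ihy' =>
        intro r
        rw [smul_add, DirectSum.decompose_add, DirectSum.add_apply, Submodule.coe_add]
        exact T.add_mem (ihy r) (ihy' r)
      | smul r' y hyy ihy =>
        intro r
        rw [← mul_smul]
        exact ihy (r * r')
    have := claim x hx' 1
    rwa [one_smul, DirectSum.decompose_of_mem_same ℳ hxm] at this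
  -- spreading over the quadrant
  have spread : ∀ a b : ℕ, t₀ ≤ a → t₀ ≤ b → (∀ x ∈ ℳ (a, b), x ∈ H → x ∈ T) →
      ∀ n i : ℕ, a ≤ n → b ≤ i → (∀ x ∈ ℳ (n, i), x ∈ H → x ∈ T) := by
    intro a b ha hb hbase n i hn hi
    have hrow : ∀ n', a ≤ n' → (∀ x ∈ ℳ (n', b), x ∈ H → x ∈ T) := by
      intro n' hn'
      induction n', hn' using Nat.le_induction with
      | base => exact hbase
      | succ n' hn' ih =>
        have h := prop (1, 0) (n', b) rfl (le_trans ha hn') hb ih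
        exact h
    have hcol : ∀ i', b ≤ i' → (∀ x ∈ ℳ (n, i'), x ∈ H → x ∈ T) := by
      intro i' hi'
      induction i', hi' using Nat.le_induction with
      | base => exact hrow n hn
      | succ i' hi' ih =>
        have h := prop (0, 1) (n, i') rfl (le_trans ha hn) (le_trans hb hi') ih
        exact h
    exact hcol i hi
  by_cases hQ : ∃ a b : ℕ, t₀ ≤ a ∧ t₀ ≤ b ∧ (∀ x ∈ ℳ (a, b), x ∈ H → x ∈ T)
  · obtain ⟨a, b, ha, hb, hq⟩ := hQ
    refine ⟨a, b, fun n i hn hi => ?_⟩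
    have h1 : ¬ p ∈ associatedPrimes A (ℳ (n, i)) := fun h =>
      (memb (n, i)).mp h (spread a b ha hb hq n i hn hi)
    have h2 : ¬ p ∈ associatedPrimes A (ℳ (a, b)) := fun h => (memb (a, b)).mp h hq
    exact iff_of_false h1 h2
  · push_neg at hQ
    refine ⟨t₀, t₀, fun n i hn hi => ?_⟩
    have h1 : p ∈ associatedPrimes A (ℳ (n, i)) := by
      rw [memb]
      intro hq
      obtain ⟨x, hx1, hx2, hx3⟩ := hQ n i hn hi
      exact hx3 (hq x hx1 hx2)
    have h2 : p ∈ associatedPrimes A (ℳ (t₀, t₀)) := by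
      rw [memb]
      intro hq
      obtain ⟨x, hx1, hx2, hx3⟩ := hQ t₀ t₀ le_rfl le_rfl
      exact hx3 (hq x hx1 hx2)
    exact iff_of_true h1 h2

end GradedModule


end AssBigradedProof

theorem ass_bigraded_components_eventually_constant
    (A R : Type) [CommRing A] [CommRing R] [Algebra A R] [IsNoetherianRing A]
    (𝒜 : ℕ × ℕ → Submodule A R) [GradedAlgebra 𝒜]
    -- `A = R_{(0,0)}` (the degree-(0,0) piece is the image of `A` in `R`):
    (hA : 𝒜 (0, 0) = 1)
    -- `R` is standard: generated as an `A`-algebra by finitely many elements of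
    -- degrees (1,0) and (0,1):
    (hstd : ∃ s : Finset R, (↑s : Set R) ⊆ (↑(𝒜 (1, 0)) ∪ ↑(𝒜 (0, 1)) : Set R) ∧
      Algebra.adjoin A (↑s : Set R) = ⊤)
    -- `M = ⊕_{(r,s)} ℳ (r,s)` is a finitely generated bigraded `R`-module:
    (M : Type) [AddCommGroup M] [Module A M] [Module R M] [IsScalarTower A R M]
    (ℳ : ℕ × ℕ → Submodule A M) [DirectSum.Decomposition ℳ] [SetLike.GradedSMul 𝒜 ℳ]
    [Module.Finite R M] :
    ∃ n₀ i₀ : ℕ, ∀ n i : ℕ, n₀ ≤ n → i₀ ≤ i →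
      associatedPrimes A (ℳ (n, i)) = associatedPrimes A (ℳ (n₀, i₀)) := by
  classical
  obtain ⟨s, hs1, hs2⟩ := hstd
  haveI hFT : Algebra.FiniteType A R := ⟨⟨s, hs2⟩⟩
  haveI : IsNoetherianRing R := Algebra.FiniteType.isNoetherianRing A R
  have hch : ∀ p : Ideal A, ∃ a b : ℕ, ∀ n i : ℕ, a ≤ n → b ≤ i →
      (p ∈ associatedPrimes A (ℳ (n, i)) ↔ p ∈ associatedPrimes A (ℳ (a, b))) := by
    intro p
    by_cases hp : p.IsPrime
    · exact AssBigradedProof.perprime 𝒜 ℳ hs1 hs2 hp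
    · exact ⟨0, 0, fun n i _ _ => iff_of_false (fun h => hp h.1) (fun h => hp h.1)⟩
  choose aF bF hab using hch
  have hfin : ((fun Q : Ideal R => Q.comap (algebraMap A R)) '' (associatedPrimes R M)).Finite :=
    (AssBigradedProof.ass_finite (R := R) (M := M)).image _
  set Fs := hfin.toFinset with hFs
  set n₀ := Fs.sup aF with hn₀
  set i₀ := Fs.sup bF with hi₀
  refine ⟨n₀, i₀, fun n i hn hi => ?_⟩
  ext p
  have hmemF : ∀ n' i' : ℕ, p ∈ associatedPrimes A (ℳ (n', i')) → p ∈ Fs := by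
    intro n' i' hmem
    obtain ⟨hp, x, hx⟩ := AssBigradedProof.ass_iff'.mp hmem
    have hx' : p = (A ∙ (x : M)).annihilator := by rw [hx, AssBigradedProof.ann_coe]
    obtain ⟨Q, hQ, hQc⟩ := AssBigradedProof.contract (R := R) hp (x : M) hx'
    rw [hFs, Set.Finite.mem_toFinset]
    exact ⟨Q, hQ, hQc⟩
  constructor
  · intro h
    have hpF := hmemF n i h
    have hb1 : aF p ≤ n₀ := Finset.le_sup hpF
    have hb2 : bF p ≤ i₀ := Finset.le_sup hpF
    have h1 := hab p n i (le_trans hb1 hn) (le_trans hb2 hi)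
    have h2 := hab p n₀ i₀ hb1 hb2
    exact h2.mpr (h1.mp h)
  · intro h
    have hpF := hmemF n₀ i₀ h
    have hb1 : aF p ≤ n₀ := Finset.le_sup hpF
    have hb2 : bF p ≤ i₀ := Finset.le_sup hpF
    have h1 := hab p n i (le_trans hb1 hn) (le_trans hb2 hi)
    have h2 := hab p n₀ i₀ hb1 hb2
    exact h1.mpr (h2.mp h)
end

section
/- Let R be a standard Noetherian ℕ₀²-graded algebra with A = R_{(0,0)} Noetherian, and let M = ⊕_{(i,j) ∈ ℕ₀²} M_{(i,j)} be a bigraded R-module (not necessarily finitely generated) such that Ass_A(M) is finite. Let L = Γ_{R_{++}}(M) = { x ∈ M : (R_{++})^k · x = 0 for some k ≥ 1 }, with its induced bigrading L = ⊕ L_{(i,j)}. If there exists l = (l₁, l₂) ∈ ℕ₀² such that Ass_A(L_{(n₁,n₂)}) = Ass_A(L_{(l₁,l₂)}) for all (n₁, n₂) with n₁ ≥ l₁ and n₂ ≥ l₂, then there exists h = (h₁, h₂) ∈ ℕ₀² such that Ass_A(M_{(n₁,n₂)}) = Ass_A(M_{(h₁,h₂)}) for all (n₁, n₂) with n₁ ≥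 h₁ and n₂ ≥ h₂. -/
/-!
Statement 10: Let R be a standard Noetherian ℕ₀²-graded algebra with A = R_{(0,0)} Noetherian,
and let M = ⊕_{(i,j)} M_{(i,j)} be a bigraded R-module (not necessarily finitely generated) such
that Ass_A(M) is finite.  Let L = Γ_{R₊₊}(M) be the R₊₊-torsion submodule of M, with its induced
bigrading.  If there exists l ∈ ℕ₀² such that Ass_A(L_{(n₁,n₂)}) = Ass_A(L_{(l₁,l₂)}) for all
(n₁,n₂) ≥ l, then there exists h ∈ ℕ₀² such that Ass_A(M_{(n₁,n₂)}) = Ass_A(M_{(h₁,h₂)}) for all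
(n₁,n₂) ≥ h.
-/

/-- The `P`-torsion submodule Γ_P(M) = { x ∈ M : P^k • x = 0 for some k ≥ 1 } of an ideal
`P` of `R`, as a submodule of the `R`-module `M`. -/
noncomputable def idealTorsion (R : Type) [CommRing R] (M : Type) [AddCommGroup M] [Module R M]
    (P : Ideal R) : Submodule R M :=
  ⨆ k : ℕ, Submodule.torsionBySet R M ((P ^ (k + 1) : Ideal R) : Set R)

theorem ass_bigraded_components_eventually_constant_of_torsion
    (A R : Type) [CommRing A] [CommRing R] [Algebra A R] [IsNoetherianRing A]
    (𝒜 : ℕ × ℕ → Submodule A R) [GradedAlgebra 𝒜]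
    -- `A = R_{(0,0)}` (the degree-(0,0) piece is the image of `A` in `R`):
    (hA : 𝒜 (0, 0) = 1)
    -- `R` is standard: generated as an `A`-algebra by finitely many elements of
    -- degrees (1,0) and (0,1):
    (hstd : ∃ s : Finset R, (↑s : Set R) ⊆ (↑(𝒜 (1, 0)) ∪ ↑(𝒜 (0, 1)) : Set R) ∧
      Algebra.adjoin A (↑s : Set R) = ⊤)
    -- `M = ⊕_{(i,j)} ℳ (i,j)` is a bigraded `R`-module (not necessarily finitely generated):
    (M : Type) [AddCommGroup M] [Module A M] [Module R M] [IsScalarTower A R M]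
    (ℳ : ℕ × ℕ → Submodule A M) [DirectSum.Decomposition ℳ] [SetLike.GradedSMul 𝒜 ℳ]
    -- `Ass_A(M)` is finite:
    (hAssFin : (associatedPrimes A M).Finite)
    -- the component of bidegree `(i,j)` of `L = Γ_{R₊₊}(M)`, where `R₊₊` is the ideal of `R`
    -- generated by `R_{(1,1)}`:
    (L : ℕ × ℕ → Submodule A M)
    (hL : ∀ d : ℕ × ℕ, L d =
      (Submodule.restrictScalars A
        (idealTorsion R M (Ideal.span (↑(𝒜 (1, 1)) : Set R)))) ⊓ ℳ d)
    -- hypothesis (1): the associated primes of the components of `L` stabilize: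
    (hstab : ∃ l : ℕ × ℕ, ∀ n : ℕ × ℕ, l.1 ≤ n.1 → l.2 ≤ n.2 →
      associatedPrimes A (L n) = associatedPrimes A (L l)) :
    -- conclusion (2): the associated primes of the components of `M` stabilize:
    ∃ h : ℕ × ℕ, ∀ n : ℕ × ℕ, h.1 ≤ n.1 → h.2 ≤ n.2 →
      associatedPrimes A (ℳ n) = associatedPrimes A (ℳ h) := by
  classical
  obtain ⟨s, hs_sub, hs_adj⟩ := hstd
  obtain ⟨l, hstabl⟩ := hstab
  set P : Ideal R := Ideal.span (↑(𝒜 (1, 1)) : Set R) with hPdef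
  set Γ : Submodule R M := idealTorsion R M P with hΓdef
  -- commutation of the two scalar actions
  have hcomm : ∀ (a : A) (r : R) (m : M), a • r • m = r • a • m := by
    intro a r m
    rw [← algebraMap_smul R a m, ← algebraMap_smul R a (r • m), smul_smul, smul_smul, mul_comm]
  have hsmulA : ∀ (a : A) (z : M), z ∈ Γ → a • z ∈ Γ := by
    intro a z hz
    rw [← algebraMap_smul R a z]
    exact Γ.smul_mem _ hz
  -- description of Γ membership
  have hdir : Directed (· ≤ ·)
      (fun k : ℕ => Submodule.torsionBySet R M ((P ^ (k + 1) : Ideal R) : Set R)) := by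
    intro i j
    refine ⟨max i j, ?_, ?_⟩ <;>
      refine Submodule.torsionBySet_le_torsionBySet_of_subset ?_ <;>
      exact_mod_cast Ideal.pow_le_pow_right (by omega)
  have hΓiff : ∀ z : M, z ∈ Γ ↔ ∃ k : ℕ, ∀ r ∈ (P ^ (k + 1) : Ideal R), r • z = 0 := by
    intro z
    rw [hΓdef]
    unfold idealTorsion
    rw [Submodule.mem_iSup_of_directed _ hdir]
    constructor <;> rintro ⟨k, hk⟩ <;> refine ⟨k, ?_⟩
    · intro r hr
      exact (Submodule.mem_torsionBySet_iff _ _).1 hk ⟨r, hr⟩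
    · rw [Submodule.mem_torsionBySet_iff]
      rintro ⟨r, hr⟩
      exact hk r hr
  have hΓof : ∀ (k : ℕ) (z : M), (∀ r ∈ (P ^ (k + 1) : Ideal R), r • z = 0) → z ∈ Γ := by
    intro k z hz
    exact (hΓiff z).2 ⟨k, hz⟩
  -- membership in the components of L
  have hLmem : ∀ (d : ℕ × ℕ) (z : M), z ∈ L d ↔ z ∈ Γ ∧ z ∈ ℳ d := by
    intro d z
    rw [hL d, Submodule.mem_inf, Submodule.restrictScalars_mem]
  -- the key graded lemma : 𝒜 (1,1) is contained in the ideal generated by the degree-e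
  -- generators, for e = (1,0) or (0,1)
  have hkey : ∀ e f : ℕ × ℕ, (e = (1, 0) ∧ f = (0, 1)) ∨ (e = (0, 1) ∧ f = (1, 0)) →
      (↑(𝒜 (1, 1)) : Set R) ⊆ ↑(Ideal.span ((↑s : Set R) ∩ ↑(𝒜 e))) := by
    intro e f hef ξ hξ
    have hIhom : (Ideal.span ((↑s : Set R) ∩ ↑(𝒜 e))).IsHomogeneous 𝒜 :=
      Ideal.homogeneous_span 𝒜 _ (fun x hx => ⟨e, hx.2⟩)
    have hξm : ξ ∈ Submodule.span A ((Submonoid.closure (↑s : Set R) : Submonoid R) : Set R) := by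
      have h1 : ξ ∈ Subalgebra.toSubmodule (Algebra.adjoin A (↑s : Set R)) := by
        rw [hs_adj]; exact Submodule.mem_top
      rwa [Algebra.adjoin_eq_span] at h1
    have hmain : ∀ x ∈ Submodule.span A ((Submonoid.closure (↑s : Set R) : Submonoid R) : Set R),
        (DirectSum.decompose 𝒜 x (1, 1) : R) ∈ Ideal.span ((↑s : Set R) ∩ ↑(𝒜 e)) := by
      intro x hx
      induction hx using Submodule.span_induction with
      | mem m hm =>
        have hq : m ∈ Ideal.span ((↑s : Set R) ∩ ↑(𝒜 e)) ∨ ∃ b : ℕ, m ∈ 𝒜 (b • f) := by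
          induction hm using Submonoid.closure_induction with
          | mem x hxs =>
            rcases hef with ⟨he, hf⟩ | ⟨he, hf⟩ <;> subst he <;> subst hf <;>
              rcases hs_sub hxs with h | h
            · exact Or.inl (Ideal.subset_span ⟨hxs, h⟩)
            · exact Or.inr ⟨1, by simpa using h⟩
            · exact Or.inr ⟨1, by simpa using h⟩
            · exact Or.inl (Ideal.subset_span ⟨hxs, h⟩)
          | one =>
            refine Or.inr ⟨0, ?_⟩
            rw [zero_smul]
            exact SetLike.one_mem_graded 𝒜
          | mul x y hxc hyc ihx ihy =>
            rcases ihx with h | ⟨b, hb⟩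
            · exact Or.inl (Ideal.mul_mem_right _ _ h)
            · rcases ihy with h | ⟨b', hb'⟩
              · exact Or.inl (Ideal.mul_mem_left _ _ h)
              · refine Or.inr ⟨b + b', ?_⟩
                rw [add_smul]
                exact SetLike.mul_mem_graded hb hb'
        rcases hq with h | ⟨b, hb⟩
        · exact hIhom (1, 1) h
        · have hne : b • f ≠ (1, 1) := by
            rcases hef with ⟨he, hf⟩ | ⟨he, hf⟩ <;> subst hf <;>
              simp [Prod.ext_iff, Prod.smul_mk]
          rw [DirectSum.decompose_of_mem_ne 𝒜 hb hne]
          exact Ideal.zero_mem _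
      | zero =>
        rw [DirectSum.decompose_zero, DirectSum.zero_apply, ZeroMemClass.coe_zero]
        exact Ideal.zero_mem _
      | add x y hx hy ihx ihy =>
        rw [DirectSum.decompose_add, DirectSum.add_apply, Submodule.coe_add]
        exact Ideal.add_mem _ ihx ihy
      | smul a x hx ih =>
        rw [DirectSum.decompose_smul, DirectSum.smul_apply, SetLike.val_smul,
          Algebra.smul_def]
        exact Ideal.mul_mem_left _ _ ih
    have := hmain ξ hξm
    rwa [DirectSum.decompose_of_mem_same 𝒜 hξ] at this
  -- Γ-closure lemma: if all t • z lie in Γ for t in a finite R₊₊-generating set, then z ∈ Γ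
  have hGc : ∀ T' : Set R, T'.Finite → (↑(𝒜 (1, 1)) : Set R) ⊆ ↑(Ideal.span T') →
      ∀ z : M, (∀ t ∈ T', t • z ∈ Γ) → z ∈ Γ := by
    intro T' hfin hspan z hz
    have h1 : ∀ t : R, ∃ k : ℕ, t ∈ T' → ∀ r ∈ (P ^ (k + 1) : Ideal R), r • t • z = 0 := by
      intro t
      by_cases ht : t ∈ T'
      · obtain ⟨k, hk⟩ := (hΓiff _).1 (hz t ht)
        exact ⟨k, fun _ => hk⟩
      · exact ⟨0, fun h => absurd h ht⟩
    choose f hf using h1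
    set F := hfin.toFinset with hFdef
    set k := F.sup f with hkdef
    have hPle : P ≤ Ideal.span T' := Ideal.span_le.mpr hspan
    refine hΓof (k + 1) z ?_
    intro r hr
    have h2 : (P ^ (k + 2) : Ideal R) ≤ Ideal.torsionOf R M z := by
      have hps : (P ^ (k + 2) : Ideal R) = P ^ (k + 1) * P := by rw [pow_succ]
      rw [hps]
      refine le_trans (Ideal.mul_mono_right hPle) ?_
      rw [Ideal.mul_le]
      intro u hu v hv
      induction hv using Submodule.span_induction with
      | mem t ht =>
        rw [Ideal.mem_torsionOf_iff, mul_smul]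
        have htF : t ∈ F := hfin.mem_toFinset.mpr ht
        refine hf t ht u (Ideal.pow_le_pow_right ?_ hu)
        have : f t ≤ k := Finset.le_sup htF
        omega
      | zero =>
        rw [Ideal.mem_torsionOf_iff, mul_zero, zero_smul]
      | add v w hv hw ihv ihw =>
        rw [Ideal.mem_torsionOf_iff] at ihv ihw ⊢
        rw [mul_add, add_smul, ihv, ihw, add_zero]
      | smul c v hv ih =>
        rw [Ideal.mem_torsionOf_iff] at ih ⊢
        rw [smul_eq_mul, show u * (c * v) = c * (u * v) by ring, mul_smul, ih, smul_zero]
    exact (Ideal.mem_torsionOf_iff z r).1 (h2 hr)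
  -- the step lemma
  have hstep : ∀ (δ : ℕ × ℕ) (T' : Set R), T'.Finite → T' ⊆ ↑(𝒜 δ) →
      (↑(𝒜 (1, 1)) : Set R) ⊆ ↑(Ideal.span T') →
      ∀ (p : Ideal A) (n : ℕ × ℕ), p.IsPrime →
      (∃ y ∈ ℳ n, (∀ a : A, a • y = 0 ↔ a ∈ p) ∧ (∀ a : A, a • y ∈ Γ → a • y = 0)) →
      ∃ y ∈ ℳ (δ + n), (∀ a : A, a • y = 0 ↔ a ∈ p) ∧ (∀ a : A, a • y ∈ Γ → a • y = 0) := by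
    intro δ T' hfin hdeg hspan p n hp hgood
    obtain ⟨y, hyn, hyann, hyinv⟩ := hgood
    have hT0 : ∃ t ∈ T', ∀ b : A, b • t • y ∈ Γ → b ∈ p := by
      by_contra hcon
      push_neg at hcon
      have h1 : ∀ t : R, ∃ b : A, t ∈ T' → (b • t • y ∈ Γ ∧ b ∉ p) := by
        intro t
        by_cases ht : t ∈ T'
        · obtain ⟨b, hb1, hb2⟩ := hcon t ht
          exact ⟨b, fun _ => ⟨hb1, hb2⟩⟩
        · exact ⟨0, fun h => absurd h ht⟩
      choose b hb using h1
      set F := hfin.toFinset with hFdef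
      set B := ∏ t ∈ F, b t with hBdef
      have hBt : ∀ t ∈ T', t • (B • y) ∈ Γ := by
        intro t ht
        have htF : t ∈ F := hfin.mem_toFinset.mpr ht
        have hBsplit : B = (∏ u ∈ F.erase t, b u) * b t := (Finset.prod_erase_mul F b htF).symm
        rw [← hcomm B t y, hBsplit, mul_smul]
        exact hsmulA _ _ ((hb t ht).1)
      have hBy : B • y ∈ Γ := hGc T' hfin hspan (B • y) hBt
      have hBp : B ∈ p := (hyann B).1 (hyinv B hBy)
      haveI := hp
      rw [hBdef, Ideal.IsPrime.prod_mem_iff] at hBp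
      obtain ⟨t, htF, htp⟩ := hBp
      exact (hb t (hfin.mem_toFinset.1 htF)).2 htp
    obtain ⟨t, htT, htp⟩ := hT0
    refine ⟨t • y, ?_, ?_, ?_⟩
    · exact SetLike.GradedSMul.smul_mem (hdeg htT) hyn
    · intro a
      constructor
      · intro h
        exact htp a (h ▸ Γ.zero_mem)
      · intro ha
        rw [hcomm a t y, (hyann a).2 ha, smul_zero]
    · intro a haΓ
      rw [hcomm a t y, (hyann a).2 (htp a haΓ), smul_zero]
  -- the set of "good" primes in each degree
  set G : ℕ × ℕ → Set (Ideal A) := fun n => {p | p.IsPrime ∧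
    ∃ y ∈ ℳ n, (∀ a : A, a • y = 0 ↔ a ∈ p) ∧ (∀ a : A, a • y ∈ Γ → a • y = 0)} with hGdef
  have hT1fin : ((↑s : Set R) ∩ ↑(𝒜 (1, 0))).Finite := s.finite_toSet.inter_of_left _
  have hT2fin : ((↑s : Set R) ∩ ↑(𝒜 (0, 1))).Finite := s.finite_toSet.inter_of_left _
  have hstep1 : ∀ p n, p ∈ G n → p ∈ G ((1, 0) + n) := by
    intro p n hpn
    obtain ⟨hp, hgood⟩ := hpn
    exact ⟨hp, hstep (1, 0) _ hT1fin Set.inter_subset_right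
      (hkey (1, 0) (0, 1) (Or.inl ⟨rfl, rfl⟩)) p n hp hgood⟩
  have hstep2 : ∀ p n, p ∈ G n → p ∈ G ((0, 1) + n) := by
    intro p n hpn
    obtain ⟨hp, hgood⟩ := hpn
    exact ⟨hp, hstep (0, 1) _ hT2fin Set.inter_subset_right
      (hkey (0, 1) (1, 0) (Or.inr ⟨rfl, rfl⟩)) p n hp hgood⟩
  have hiter1 : ∀ (i : ℕ) p n, p ∈ G n → p ∈ G ((i, 0) + n) := by
    intro i
    induction i with
    | zero =>
      intro p n h
      have : ((0, 0) + n : ℕ × ℕ) = n := by simp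
      rwa [this]
    | succ i ih =>
      intro p n h
      have : ((i + 1, 0) + n : ℕ × ℕ) = (1, 0) + ((i, 0) + n) := by
        simp [Prod.ext_iff]; omega
      rw [this]
      exact hstep1 p _ (ih p n h)
  have hiter2 : ∀ (j : ℕ) p n, p ∈ G n → p ∈ G ((0, j) + n) := by
    intro j
    induction j with
    | zero =>
      intro p n h
      have : ((0, 0) + n : ℕ × ℕ) = n := by simp
      rwa [this]
    | succ j ih =>
      intro p n h
      have : ((0, j + 1) + n : ℕ × ℕ) = (0, 1) + ((0, j) + n) := by
        simp [Prod.ext_iff]; omega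
      rw [this]
      exact hstep2 p _ (ih p n h)
  have hmono : ∀ (p : Ideal A) (n m : ℕ × ℕ), n.1 ≤ m.1 → n.2 ≤ m.2 → p ∈ G n → p ∈ G m := by
    intro p n m h1 h2 hpn
    have hm : m = (m.1 - n.1, 0) + ((0, m.2 - n.2) + n) := by
      simp [Prod.ext_iff]; omega
    rw [hm]
    exact hiter1 _ p _ (hiter2 _ p n hpn)
  -- transfer lemma for associated primes of submodules of M
  have hsub0 : ∀ (Q : Submodule A M) (x : Q) (a : A), a • x = 0 ↔ a • (x : M) = 0 := by
    intro Q x a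
    rw [Subtype.ext_iff]
    simp
  have hass : ∀ (Q : Submodule A M) (p : Ideal A), p ∈ associatedPrimes A Q ↔
      p.IsPrime ∧ ∃ z ∈ Q, ∀ a : A, a • z = 0 ↔ a ∈ p := by
    intro Q p
    constructor
    · intro hpa
      obtain ⟨hp, x, hx⟩ := isAssociatedPrime_iff.1 hpa
      refine ⟨hp, x, x.2, fun a => ?_⟩
      rw [← hsub0 Q x a]
      constructor
      · intro h
        rw [hx, Submodule.mem_colon_singleton, Submodule.mem_bot]
        exact h
      · intro h
        rw [hx, Submodule.mem_colon_singleton, Submodule.mem_bot] at h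
        exact h
    · rintro ⟨hp, z, hzQ, hz⟩
      refine isAssociatedPrime_iff.2 ⟨hp, ⟨z, hzQ⟩, ?_⟩
      ext a
      rw [Submodule.mem_colon_singleton, Submodule.mem_bot, hsub0 Q ⟨z, hzQ⟩ a]
      exact (hz a).symm
  have hGsub : ∀ n, G n ⊆ associatedPrimes A (ℳ n) := by
    intro n p hpn
    obtain ⟨hp, y, hy, hann, _⟩ := hpn
    exact (hass (ℳ n) p).2 ⟨hp, y, hy, hann⟩
  have hsubAss : ∀ n, associatedPrimes A (ℳ n) ⊆ associatedPrimes A M := by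
    intro n
    exact associatedPrimes.subset_of_injective (ℳ n).injective_subtype
  have hGfin : ∀ n, (G n).Finite := fun n => hAssFin.subset ((hGsub n).trans (hsubAss n))
  -- stabilization of G
  have hgcb : ∀ m : ℕ, (G (m, m)).ncard ≤ (associatedPrimes A M).ncard := by
    intro m
    exact Set.ncard_le_ncard ((hGsub _).trans (hsubAss _)) hAssFin
  have hbdd : BddAbove (Set.range fun m : ℕ => (G (m, m)).ncard) := by
    refine ⟨(associatedPrimes A M).ncard, ?_⟩
    rintro x ⟨m, rfl⟩
    exact hgcb m
  obtain ⟨m₀, hm₀⟩ := Nat.sSup_mem (Set.range_nonempty _) hbdd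
  have hstabG : ∀ n : ℕ × ℕ, m₀ ≤ n.1 → m₀ ≤ n.2 → G n = G (m₀, m₀) := by
    intro n h1 h2
    have hmax : G (m₀, m₀) = G (max n.1 n.2, max n.1 n.2) := by
      refine Set.eq_of_subset_of_ncard_le ?_ ?_ (hGfin _)
      · exact fun p hp => hmono p _ _ (le_trans h1 (le_max_left _ _))
          (le_trans h2 (le_max_right _ _)) hp
      · exact le_trans (le_csSup hbdd ⟨max n.1 n.2, rfl⟩) (le_of_eq hm₀.symm)
    refine subset_antisymm ?_ (fun p hp => hmono p _ _ h1 h2 hp)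
    intro p hp
    rw [hmax]
    exact hmono p n _ (le_max_left _ _) (le_max_right _ _) hp
  -- main computation of the associated primes of ℳ n for large n
  have hmain : ∀ n : ℕ × ℕ, max l.1 m₀ ≤ n.1 → max l.2 m₀ ≤ n.2 →
      associatedPrimes A (ℳ n) = associatedPrimes A (L l) ∪ G (m₀, m₀) := by
    intro n hn1 hn2
    have hLn : associatedPrimes A (L n) = associatedPrimes A (L l) :=
      hstabl n (le_trans (le_max_left _ _) hn1) (le_trans (le_max_left _ _) hn2)
    have hGn : G n = G (m₀, m₀) :=
      hstabG n (le_trans (le_max_right _ _) hn1) (le_trans (le_max_right _ _) hn2)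
    apply Set.Subset.antisymm
    · intro p hp
      obtain ⟨hprime, x, hxmem, hann⟩ := (hass (ℳ n) p).1 hp
      by_cases hcase : ∀ a : A, a • x ∈ Γ → a • x = 0
      · right
        rw [← hGn]
        exact ⟨hprime, x, hxmem, hann, hcase⟩
      · left
        push_neg at hcase
        obtain ⟨a, haΓ, hane⟩ := hcase
        have hanp : a ∉ p := fun h => hane ((hann a).2 h)
        rw [← hLn]
        refine (hass (L n) p).2 ⟨hprime, a • x,
          (hLmem n (a • x)).2 ⟨haΓ, Submodule.smul_mem _ _ hxmem⟩, ?_⟩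
        intro b
        rw [smul_smul, hann (b * a)]
        constructor
        · intro h
          exact (hprime.mem_or_mem h).resolve_right hanp
        · intro h
          exact Ideal.mul_mem_right a p h
    · intro p hp
      rcases hp with hp | hp
      · rw [← hLn] at hp
        obtain ⟨hprime, z, hzL, hann⟩ := (hass (L n) p).1 hp
        exact (hass (ℳ n) p).2 ⟨hprime, z, ((hLmem n z).1 hzL).2, hann⟩
      · rw [← hGn] at hp
        obtain ⟨hprime, y, hym, hann, _⟩ := hp
        exact (hass (ℳ n) p).2 ⟨hprime, y, hym, hann⟩
  refine ⟨(max l.1 m₀, max l.2 m₀), fun n h1 h2 => ?_⟩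
  rw [hmain n h1 h2, hmain _ le_rfl le_rfl]
end

section
/- Let R be a standard Noetherian ℕ₀²-graded algebra whose degree-(0,0) part A = R_{(0,0)} is a Noetherian local ring, and let M be a finitely generated bigraded R-module. Then there exist r₀, s₀ ≥ 0 such that the bidegree-(r,s) component of the R_{++}-torsion submodule Γ_{R_{++}}(M) = { x ∈ M : (R_{++})^k · x = 0 for some k ≥ 1 } is zero for all r ≥ r₀ and s ≥ s₀. -/
open DirectSum

section Aux

variable {A R : Type} [CommRing A] [CommRing R] [Algebra A R]
  (𝒜 : ℕ × ℕ → Submodule A R) [GradedAlgebra 𝒜]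

lemma aux_prod_mem (e : ℕ × ℕ) (u : Multiset R) (h : ∀ z ∈ u, z ∈ 𝒜 e) :
    u.prod ∈ 𝒜 (Multiset.card u • e) := by
  induction u using Multiset.induction_on with
  | empty => simpa using SetLike.one_mem_graded 𝒜
  | cons a u ih =>
    rw [Multiset.prod_cons, Multiset.card_cons, succ_nsmul, add_comm]
    exact SetLike.mul_mem_graded (h a (Multiset.mem_cons_self _ _))
      (ih fun z hz => h z (Multiset.mem_cons_of_mem hz))

lemma aux_multiset_pow :
    ∀ (n : ℕ) (u v : Multiset R), (∀ z ∈ u, z ∈ 𝒜 (1,0)) → (∀ z ∈ v, z ∈ 𝒜 (0,1)) →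
      n ≤ Multiset.card u → n ≤ Multiset.card v →
      u.prod * v.prod ∈ (Ideal.span ((𝒜 (1,1) : Submodule A R) : Set R)) ^ n := by
  intro n
  induction n with
  | zero => intro u v _ _ _ _; simp [Ideal.one_eq_top]
  | succ n ih =>
    intro u v hu hv hcu hcv
    obtain ⟨a, ha⟩ := Multiset.card_pos_iff_exists_mem.mp (lt_of_lt_of_le (Nat.succ_pos n) hcu)
    obtain ⟨b, hb⟩ := Multiset.card_pos_iff_exists_mem.mp (lt_of_lt_of_le (Nat.succ_pos n) hcv)
    obtain ⟨u', rfl⟩ := Multiset.exists_cons_of_mem ha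
    obtain ⟨v', rfl⟩ := Multiset.exists_cons_of_mem hb
    rw [Multiset.prod_cons, Multiset.prod_cons]
    have hab : a * b ∈ 𝒜 (1,1) := by
      have := SetLike.mul_mem_graded (hu a (Multiset.mem_cons_self _ _))
        (hv b (Multiset.mem_cons_self _ _))
      simpa using this
    have hcu' : n ≤ Multiset.card u' := by
      rw [Multiset.card_cons] at hcu; omega
    have hcv' : n ≤ Multiset.card v' := by
      rw [Multiset.card_cons] at hcv; omega
    have h' := ih u' v' (fun z hz => hu z (Multiset.mem_cons_of_mem hz))
      (fun z hz => hv z (Multiset.mem_cons_of_mem hz)) hcu' hcv'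
    have heq : a * u'.prod * (b * v'.prod) = (a * b) * (u'.prod * v'.prod) := by ring
    rw [heq, pow_succ']
    exact Ideal.mul_mem_mul (Ideal.subset_span hab) h'

lemma aux_piece_le_pow
    (hstd : ∃ s : Finset R, (↑s : Set R) ⊆ (↑(𝒜 (1, 0)) ∪ ↑(𝒜 (0, 1)) : Set R) ∧
      Algebra.adjoin A (↑s : Set R) = ⊤)
    {n c d : ℕ} (hc : n ≤ c) (hd : n ≤ d) {x : R} (hx : x ∈ 𝒜 (c, d)) :
    x ∈ (Ideal.span ((𝒜 (1,1) : Submodule A R) : Set R)) ^ n := by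
  classical
  obtain ⟨s, hs, hgen⟩ := hstd
  have hxspan : x ∈ Submodule.span A ((Submonoid.closure (↑s : Set R) : Submonoid R) : Set R) := by
    rw [← Algebra.adjoin_eq_span]
    show x ∈ Subalgebra.toSubmodule (Algebra.adjoin A (↑s : Set R))
    rw [hgen]; trivial
  have key : ∀ y ∈ Submodule.span A ((Submonoid.closure (↑s : Set R) : Submonoid R) : Set R),
      ((DirectSum.decompose 𝒜 y (c,d) : R)) ∈
        (Ideal.span ((𝒜 (1,1) : Submodule A R) : Set R)) ^ n := by
    intro y hy
    induction hy using Submodule.span_induction with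
    | mem y hy =>
      obtain ⟨l, hl, rfl⟩ := Submonoid.exists_multiset_of_mem_closure hy
      set u := l.filter (· ∈ 𝒜 (1,0)) with hu
      set v := l.filter (fun z => ¬ (z ∈ 𝒜 (1,0))) with hv
      have hl2 : u + v = l := Multiset.filter_add_not _ l
      have hud : ∀ z ∈ u, z ∈ 𝒜 (1,0) := fun z hz => (Multiset.mem_filter.mp hz).2
      have hvd : ∀ z ∈ v, z ∈ 𝒜 (0,1) := by
        intro z hz
        obtain ⟨hzl, hz1⟩ := Multiset.mem_filter.mp hz
        rcases hs (hl z hzl) with h | h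
        · exact absurd h hz1
        · exact h
      have hprod : l.prod = u.prod * v.prod := by rw [← hl2, Multiset.prod_add]
      have hmem : l.prod ∈ 𝒜 (Multiset.card u, Multiset.card v) := by
        rw [hprod]
        have h12 := SetLike.mul_mem_graded (aux_prod_mem 𝒜 (1,0) u hud)
          (aux_prod_mem 𝒜 (0,1) v hvd)
        simpa [Prod.ext_iff] using h12
      by_cases hcd : ((Multiset.card u, Multiset.card v) : ℕ × ℕ) = (c,d)
      · obtain ⟨hc', hd'⟩ := Prod.ext_iff.mp hcd
        have hmem' : l.prod ∈ 𝒜 (c, d) := hcd ▸ hmem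
        rw [DirectSum.decompose_of_mem_same 𝒜 hmem', hprod]
        exact aux_multiset_pow 𝒜 n u v hud hvd (by simp at hc'; omega) (by simp at hd'; omega)
      · rw [DirectSum.decompose_of_mem_ne 𝒜 hmem hcd]
        exact Submodule.zero_mem _
    | zero => simp
    | add a b _ _ iha ihb =>
      rw [DirectSum.decompose_add, DirectSum.add_apply, Submodule.coe_add]
      exact add_mem iha ihb
    | smul a y _ ih =>
      rw [DirectSum.decompose_smul, DFinsupp.smul_apply, Submodule.coe_smul, Algebra.smul_def]
      exact Ideal.mul_mem_left _ _ ih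
  have := key x hxspan
  rwa [DirectSum.decompose_of_mem_same 𝒜 hx] at this


variable {M : Type} [AddCommGroup M] [Module A M] [Module R M] [IsScalarTower A R M]
  (ℳ : ℕ × ℕ → Submodule A M) [DirectSum.Decomposition ℳ] [SetLike.GradedSMul 𝒜 ℳ]

set_option synthInstance.maxHeartbeats 1000000 in
/-- Projection onto the degree-`i` component, as an additive monoid hom. -/
noncomputable def projM (i : ℕ × ℕ) : M →+ M :=
  ((ℳ i).subtype.toAddMonoidHom).comp
    ((DFinsupp.evalAddMonoidHom i).comp (DirectSum.decomposeAddEquiv ℳ).toAddMonoidHom)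

lemma projM_apply (i : ℕ × ℕ) (m : M) : projM ℳ i m = (DirectSum.decompose ℳ m i : M) := rfl

lemma aux_kill {p : R} {j : ℕ × ℕ} (hp : p ∈ 𝒜 j) {t : M} (ht : p • t = 0)
    (i : ℕ × ℕ) : p • (DirectSum.decompose ℳ t i : M) = 0 := by
  classical
  by_cases hi : i ∈ (DirectSum.decompose ℳ t).support
  case neg =>
    rw [DFinsupp.notMem_support_iff.mp hi]
    simp
  case pos =>
    have h0 : (0 : M) = ∑ k ∈ (DirectSum.decompose ℳ t).support,
        p • (DirectSum.decompose ℳ t k : M) := by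
      rw [← Finset.smul_sum, DirectSum.sum_support_decompose ℳ t, ht]
    have h2 := congrArg (projM ℳ (j + i)) h0
    rw [map_zero, map_sum] at h2
    rw [Finset.sum_eq_single i] at h2
    · rw [projM_apply,
        DirectSum.decompose_of_mem_same ℳ
          (show p • (DirectSum.decompose ℳ t i : M) ∈ ℳ (j + i) from
            SetLike.GradedSMul.smul_mem hp (DirectSum.decompose ℳ t i).2)] at h2
      exact h2.symm
    · intro k _ hki
      rw [projM_apply, DirectSum.decompose_of_mem_ne ℳ
        (show p • (DirectSum.decompose ℳ t k : M) ∈ ℳ (j + k) from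
          SetLike.GradedSMul.smul_mem hp (DirectSum.decompose ℳ t k).2)
        (fun h => hki (add_left_cancel h))]
    · intro h; exact absurd hi h

lemma aux_K
    (hstd : ∃ s : Finset R, (↑s : Set R) ⊆ (↑(𝒜 (1, 0)) ∪ ↑(𝒜 (0, 1)) : Set R) ∧
      Algebra.adjoin A (↑s : Set R) = ⊤) (t : M) :
    ∃ r₀ s₀ : ℕ, t ∈ idealTorsion R M (Ideal.span (↑(𝒜 (1, 1)) : Set R)) →
      ∀ r s : ℕ, r₀ ≤ r → s₀ ≤ s → ∀ g : R, projM ℳ (r, s) (g • t) = 0 := by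
  classical
  by_cases ht : t ∈ idealTorsion R M (Ideal.span (↑(𝒜 (1, 1)) : Set R))
  case neg => exact ⟨0, 0, fun h => absurd h ht⟩
  case pos =>
    have hdir : Directed (· ≤ ·) (fun k : ℕ =>
        Submodule.torsionBySet R M ((Ideal.span (↑(𝒜 (1, 1)) : Set R) ^ (k + 1) : Ideal R) : Set R)) := by
      apply Monotone.directed_le
      intro k l hkl
      exact Submodule.torsionBySet_le_torsionBySet_of_subset
        (Ideal.pow_le_pow_right (by omega))
    obtain ⟨k, hk⟩ := (Submodule.mem_iSup_of_directed _ hdir).mp ht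
    refine ⟨(DirectSum.decompose ℳ t).support.sup Prod.fst + (k + 1),
            (DirectSum.decompose ℳ t).support.sup Prod.snd + (k + 1),
            fun _ r s hr hs g => ?_⟩
    conv_lhs => rw [← DirectSum.sum_support_decompose ℳ t, Finset.smul_sum]
    rw [map_sum]
    apply Finset.sum_eq_zero
    intro i hi
    have hgt : g • (DirectSum.decompose ℳ t i : M)
        = ∑ j ∈ (DirectSum.decompose 𝒜 g).support,
            (DirectSum.decompose 𝒜 g j : R) • (DirectSum.decompose ℳ t i : M) := by
      rw [← Finset.sum_smul, DirectSum.sum_support_decompose 𝒜 g]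
    rw [hgt, map_sum]
    apply Finset.sum_eq_zero
    intro j _
    by_cases hji : j + i = ((r, s) : ℕ × ℕ)
    case neg =>
      rw [projM_apply, DirectSum.decompose_of_mem_ne ℳ
        (show (DirectSum.decompose 𝒜 g j : R) • (DirectSum.decompose ℳ t i : M) ∈ ℳ (j + i) from
          SetLike.GradedSMul.smul_mem (DirectSum.decompose 𝒜 g j).2
            (DirectSum.decompose ℳ t i).2) hji]
    case pos =>
      have hi1 : i.1 ≤ (DirectSum.decompose ℳ t).support.sup Prod.fst := Finset.le_sup hi
      have hi2 : i.2 ≤ (DirectSum.decompose ℳ t).support.sup Prod.snd := Finset.le_sup hi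
      obtain ⟨hj1, hj2⟩ := Prod.ext_iff.mp hji
      simp only [Prod.fst_add, Prod.snd_add] at hj1 hj2
      have hn1 : k + 1 ≤ j.1 := by omega
      have hn2 : k + 1 ≤ j.2 := by omega
      have hgP : (DirectSum.decompose 𝒜 g j : R)
          ∈ (Ideal.span ((𝒜 (1,1) : Submodule A R) : Set R)) ^ (k + 1) :=
        aux_piece_le_pow 𝒜 hstd hn1 hn2
          (show _ ∈ 𝒜 (j.1, j.2) from (DirectSum.decompose 𝒜 g j).2)
      have hkill : (DirectSum.decompose 𝒜 g j : R) • t = 0 :=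
        (Submodule.mem_torsionBySet_iff _ t).mp hk ⟨_, hgP⟩
      rw [aux_kill 𝒜 ℳ (DirectSum.decompose 𝒜 g j).2 hkill i, map_zero]

end Aux

theorem torsion_components_eventually_vanish
    (A R : Type) [CommRing A] [CommRing R] [Algebra A R] [IsNoetherianRing A] [IsLocalRing A]
    (𝒜 : ℕ × ℕ → Submodule A R) [GradedAlgebra 𝒜]
    -- `A = R_{(0,0)}` (the degree-(0,0) piece is the image of `A` in `R`):
    (hA : 𝒜 (0, 0) = 1)
    -- `R` is standard: generated as an `A`-algebra by finitely many elements of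
    -- degrees (1,0) and (0,1):
    (hstd : ∃ s : Finset R, (↑s : Set R) ⊆ (↑(𝒜 (1, 0)) ∪ ↑(𝒜 (0, 1)) : Set R) ∧
      Algebra.adjoin A (↑s : Set R) = ⊤)
    -- `M = ⊕_{(r,s)} ℳ (r,s)` is a finitely generated bigraded `R`-module:
    (M : Type) [AddCommGroup M] [Module A M] [Module R M] [IsScalarTower A R M]
    (ℳ : ℕ × ℕ → Submodule A M) [DirectSum.Decomposition ℳ] [SetLike.GradedSMul 𝒜 ℳ]
    [Module.Finite R M] :
    -- the bidegree-(r,s) component of `Γ_{R₊₊}(M)` vanishes for all r ≥ r₀, s ≥ s₀,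
    -- where `R₊₊` is the ideal of `R` generated by `R_{(1,1)}`:
    ∃ r₀ s₀ : ℕ, ∀ r s : ℕ, r₀ ≤ r → s₀ ≤ s →
      (Submodule.restrictScalars A
        (idealTorsion R M (Ideal.span (↑(𝒜 (1, 1)) : Set R)))) ⊓ ℳ (r, s) = ⊥ := by
  classical
  obtain ⟨sgen, hsgen⟩ := hstd
  have hFT : Algebra.FiniteType A R := ⟨⟨sgen, hsgen.2⟩⟩
  have hNR : IsNoetherianRing R := Algebra.FiniteType.isNoetherianRing A R
  have hNM : IsNoetherian R M := isNoetherian_of_isNoetherianRing_of_finite R M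
  obtain ⟨T, hT⟩ := (IsNoetherian.noetherian
    (idealTorsion R M (Ideal.span (↑(𝒜 (1, 1)) : Set R))))
  choose R₀ S₀ hK using aux_K 𝒜 ℳ ⟨sgen, hsgen⟩
  refine ⟨T.sup R₀, T.sup S₀, fun r s hr hs => ?_⟩
  rw [eq_bot_iff]
  intro x hx
  obtain ⟨hxΓ, hxM⟩ := Submodule.mem_inf.mp hx
  rw [Submodule.mem_bot]
  have hxspan : x ∈ Submodule.span R (↑T : Set M) := by rw [hT]; exact hxΓ
  obtain ⟨f, -, hf⟩ := Submodule.mem_span_finset.mp hxspan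
  have hx0 : x = projM ℳ (r, s) x := (DirectSum.decompose_of_mem_same ℳ hxM).symm
  rw [hx0, ← hf, map_sum]
  apply Finset.sum_eq_zero
  intro t ht
  have htΓ : t ∈ idealTorsion R M (Ideal.span (↑(𝒜 (1, 1)) : Set R)) := by
    rw [← hT]; exact Submodule.subset_span ht
  exact hK t htΓ r s (le_trans (Finset.le_sup ht) hr) (le_trans (Finset.le_sup ht) hs) (f t)
end
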